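/- Let a, k, t, ρ be real numbers with a ≥ k + 1, k > 0, t ≥ 1 and ρ > 0. Then sinSqAngle((a + t·k − 1, t, 1), (a − 1, 0, 1), (a + ρ − 1, 0, 1)) > sinSqAngle((a + t·k, t, 1), (a, 0, 1), (a + ρ, 0, 1)). In other words, the Jacobi–Perron transformation V₁,₀;₀, which acts on coordinates by (x, y, z) ↦ (x − z, y, z), strictly increases sin²α for the state with ξ = (a + t·k, t, 1), Q₁ = (a, 0, 1) and Q₂ = (a + ρ, 0, 1). -/
import Mathlib


noncomputable section

/-- Cross product on `ℝ³`. -/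
def cross3 (u v : Fin 3 → ℝ) : Fin 3 → ℝ :=
  ![u 1 * v 2 - u 2 * v 1, u 2 * v 0 - u 0 * v 2, u 0 * v 1 - u 1 * v 0]

/-- Squared Euclidean norm on `ℝ³`. -/
def normSq3 (v : Fin 3 → ℝ) : ℝ := v 0 ^ 2 + v 1 ^ 2 + v 2 ^ 2

/-- Squared sine of the angle between the plane spanned by `u, v` and the plane
spanned by `u, w`. -/
def sinSqAngle (u v w : Fin 3 → ℝ) : ℝ :=
  normSq3 (cross3 (cross3 u v) (cross3 u w)) /
    (normSq3 (cross3 u v) * normSq3 (cross3 u w))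

lemma stmt17_key (a k t : ℝ) (ha : a ≥ k + 1) (hk : 0 < k) (ht : 1 ≤ t) :
    ((a-1+t*k)^2+t^2+1)*(a^2+k^2+1) - ((a+t*k)^2+t^2+1)*((a-1)^2+k^2+1) > 0 := by
  have h1 : (0:ℝ) ≤ a - 1 - k := by linarith
  have h2 : (0:ℝ) ≤ t - 1 := by linarith
  have ht0 : (0:ℝ) < t := by linarith
  nlinarith [mul_nonneg (mul_nonneg (mul_nonneg ht0.le hk.le) (by linarith : (0:ℝ) ≤ a - 1)) h1,
    mul_nonneg (mul_nonneg (mul_nonneg hk.le hk.le) (by nlinarith : (0:ℝ) ≤ t^2 - 1)) (by linarith : (0:ℝ) ≤ 2*a - 1),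
    mul_nonneg (mul_nonneg ht0.le hk.le) h1,
    mul_pos ht0 (mul_pos hk hk), mul_pos ht0 hk, sq_nonneg (t-1),
    mul_nonneg (mul_nonneg (mul_nonneg ht0.le hk.le) hk.le) h1,
    mul_nonneg h2 (by linarith : (0:ℝ) ≤ 2*a-1)]

lemma sinSqAngle_calc (a k t ρ : ℝ) :
    sinSqAngle ![a + t * k, t, 1] ![a, 0, 1] ![a + ρ, 0, 1] =
      (t^2*ρ^2*((a+t*k)^2+t^2+1)) /
        ((t^2*(1+k^2+a^2))*(t^2+(ρ-t*k)^2+t^2*(a+ρ)^2)) := by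
  simp [sinSqAngle, cross3, normSq3, Matrix.cons_val_zero, Matrix.cons_val_one,
    Matrix.head_cons, Matrix.cons_val_two, Matrix.tail_cons]
  ring

theorem stmt17 (a k t ρ : ℝ) (ha : a ≥ k + 1) (hk : 0 < k) (ht : 1 ≤ t) (hρ : 0 < ρ) :
    sinSqAngle ![a + t * k - 1, t, 1] ![a - 1, 0, 1] ![a + ρ - 1, 0, 1] >
      sinSqAngle ![a + t * k, t, 1] ![a, 0, 1] ![a + ρ, 0, 1] := by
  have ht0 : (0:ℝ) < t := by linarith
  have e1 : sinSqAngle ![a + t * k - 1, t, 1] ![a - 1, 0, 1] ![a + ρ - 1, 0, 1] =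
      (t^2*ρ^2*(((a-1)+t*k)^2+t^2+1)) /
        ((t^2*(1+k^2+(a-1)^2))*(t^2+(ρ-t*k)^2+t^2*((a-1)+ρ)^2)) := by
    have := sinSqAngle_calc (a-1) k t ρ
    convert this using 3 <;> ring
  have e2 := sinSqAngle_calc a k t ρ
  rw [e1, e2]
  have ha1 : (0:ℝ) < a - 1 := by linarith
  have hQ : (0:ℝ) < t^2+(ρ-t*k)^2+t^2*(a+ρ)^2 := by positivity
  have hQ' : (0:ℝ) < t^2+(ρ-t*k)^2+t^2*((a-1)+ρ)^2 := by positivity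
  have hD : (0:ℝ) < (t^2*(1+k^2+a^2))*(t^2+(ρ-t*k)^2+t^2*(a+ρ)^2) := by positivity
  have hD' : (0:ℝ) < (t^2*(1+k^2+(a-1)^2))*(t^2+(ρ-t*k)^2+t^2*((a-1)+ρ)^2) := by positivity
  rw [gt_iff_lt, div_lt_div_iff₀ hD hD']
  have key := stmt17_key a k t ha hk ht
  have hdQ : (t^2+(ρ-t*k)^2+t^2*(a+ρ)^2) - (t^2+(ρ-t*k)^2+t^2*((a-1)+ρ)^2)
      = t^2*(2*(a+ρ)-1) := by ring
  have hdQpos : (0:ℝ) < t^2*(2*(a+ρ)-1) := by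
    have : (0:ℝ) < 2*(a+ρ)-1 := by linarith
    positivity
  have hN : (0:ℝ) < (a+t*k)^2+t^2+1 := by positivity
  have hP' : (0:ℝ) < (a-1)^2+k^2+1 := by positivity
  -- main polynomial inequality
  have h1 := mul_pos key hQ
  have h2 := mul_pos (mul_pos hN hP') hdQpos
  have main : ((a+t*k)^2+t^2+1)*((a-1)^2+k^2+1)*(t^2+(ρ-t*k)^2+t^2*((a-1)+ρ)^2)
      < ((a-1+t*k)^2+t^2+1)*(a^2+k^2+1)*(t^2+(ρ-t*k)^2+t^2*(a+ρ)^2) := by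
    have hid : ((a-1+t*k)^2+t^2+1)*(a^2+k^2+1)*(t^2+(ρ-t*k)^2+t^2*(a+ρ)^2)
        - ((a+t*k)^2+t^2+1)*((a-1)^2+k^2+1)*(t^2+(ρ-t*k)^2+t^2*((a-1)+ρ)^2)
        = (((a-1+t*k)^2+t^2+1)*(a^2+k^2+1) - ((a+t*k)^2+t^2+1)*((a-1)^2+k^2+1))
            * (t^2+(ρ-t*k)^2+t^2*(a+ρ)^2)
          + (((a+t*k)^2+t^2+1)*((a-1)^2+k^2+1)) * (t^2*(2*(a+ρ)-1)) := by ring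
    linarith
  have ht4 : (0:ℝ) < t^4*ρ^2 := by positivity
  have h4 := mul_pos ht4 (sub_pos.2 main)
  have hid2 : t^2*ρ^2*(((a-1)+t*k)^2+t^2+1) * ((t^2*(1+k^2+a^2))*(t^2+(ρ-t*k)^2+t^2*(a+ρ)^2))
      - t^2*ρ^2*((a+t*k)^2+t^2+1) * ((t^2*(1+k^2+(a-1)^2))*(t^2+(ρ-t*k)^2+t^2*((a-1)+ρ)^2))
      = t^4*ρ^2 * (((a-1+t*k)^2+t^2+1)*(a^2+k^2+1)*(t^2+(ρ-t*k)^2+t^2*(a+ρ)^2)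
          - ((a+t*k)^2+t^2+1)*((a-1)^2+k^2+1)*(t^2+(ρ-t*k)^2+t^2*((a-1)+ρ)^2)) := by ring
  linarith
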